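/- Let W be a nonnegative real random variable with 0<E[W]<∞ and E[W²]=∞, let q≥2 be an integer, fix β>0 and write β'=e^β−1. Define p_{β,0}(s)=E[log(e^{β'Ws}+q−1)] − (β'·E[W]/(2q))·[(q−1)s²+2s−1] for s∈[0,1]. Then every maximizer s of p_{β,0} over [0,1] satisfies s>0; in fact there exists ε>0 (depending on β, q and the law of W) such that every maximizer satisfies s>ε. -/

import Mathlib

open MeasureTheory Filter Topology Set

/-- The reduced one-dimensional pressure functional at zero field:
`p_{β,0}(s) = E[log(e^{β'Ws}+q−1)] − (β'E[W]/(2q))·[(q−1)s²+2s−1]`, `β' = e^β−1`. -/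
noncomputable def pfun {Ω : Type*} [MeasurableSpace Ω] (μ : Measure Ω)
    (W : Ω → ℝ) (q : ℕ) (β : ℝ) (s : ℝ) : ℝ :=
  (∫ ω, Real.log (Real.exp ((Real.exp β - 1) * W ω * s) + q - 1) ∂μ)
    - (Real.exp β - 1) * (∫ ω, W ω ∂μ) / (2 * q) * ((q - 1) * s ^ 2 + 2 * s - 1)

lemma sm_log_bound (q : ℕ) (hq : 2 ≤ q) {x : ℝ} (hx : 0 ≤ x) :
    ‖Real.log (Real.exp x + q - 1)‖ ≤ x + Real.log q := by
  have hQ2 : (2:ℝ) ≤ (q:ℝ) := by exact_mod_cast hq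
  have h1 : (1:ℝ) ≤ Real.exp x := Real.one_le_exp hx
  have hpos : (0:ℝ) < Real.exp x + q - 1 := by linarith
  have hnn : 0 ≤ Real.log (Real.exp x + q - 1) := Real.log_nonneg (by linarith)
  rw [Real.norm_eq_abs, abs_of_nonneg hnn]
  have hupper : Real.exp x + q - 1 ≤ Real.exp x * q := by nlinarith
  calc Real.log (Real.exp x + q - 1)
      ≤ Real.log (Real.exp x * q) := Real.log_le_log hpos hupper
    _ = x + Real.log q := by
        rw [Real.log_mul (Real.exp_ne_zero _) (by positivity), Real.log_exp]
lemma exp_le_pow_aux (q : ℕ) (hq : 2 ≤ q) {x : ℝ} (hx : 0 ≤ x) :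
    Real.exp x ≤ (1 + (Real.exp x - 1) / q) ^ q := by
  have hQ : (2:ℝ) ≤ (q:ℝ) := by exact_mod_cast hq
  have hQ0 : (0:ℝ) < q := by linarith
  set y : ℝ := (Real.exp x - 1) / q with hy
  have hy0 : 0 ≤ y := div_nonneg (by nlinarith [Real.one_le_exp hx]) hQ0.le
  have hb := one_add_mul_le_pow (by linarith : (-2:ℝ) ≤ y) q
  have : 1 + (q:ℝ) * y = Real.exp x := by rw [hy]; field_simp; ring
  linarith

lemma pointwise_nonneg (q : ℕ) (hq : 2 ≤ q) {x : ℝ} (hx : 0 ≤ x) :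
    0 ≤ Real.log (Real.exp x + q - 1) - Real.log q - x / q := by
  have hQ : (2:ℝ) ≤ (q:ℝ) := by exact_mod_cast hq
  have hQ0 : (0:ℝ) < q := by linarith
  set y : ℝ := (Real.exp x - 1) / q with hy
  have hy0 : 0 ≤ y := div_nonneg (by nlinarith [Real.one_le_exp hx]) hQ0.le
  have hsplit : Real.exp x + q - 1 = q * (1 + y) := by rw [hy]; field_simp; ring
  have hlog : Real.log (Real.exp x + q - 1) = Real.log q + Real.log (1 + y) := by
    rw [hsplit, Real.log_mul (by positivity) (by positivity)]
  have hkey : x ≤ q * Real.log (1 + y) := by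
    have h1 : Real.exp x ≤ (1 + y) ^ q := exp_le_pow_aux q hq hx
    calc x = Real.log (Real.exp x) := (Real.log_exp x).symm
      _ ≤ Real.log ((1 + y) ^ q) := Real.log_le_log (Real.exp_pos x) h1
      _ = q * Real.log (1 + y) := by rw [Real.log_pow]
  rw [hlog]
  have : x / q ≤ Real.log (1 + y) := (div_le_iff₀ hQ0).2 (by linarith [hkey])
  linarith

lemma pointwise_quad (q : ℕ) (hq : 2 ≤ q) {x : ℝ} (hx : 0 ≤ x) (hx1 : x ≤ 1) :
    x ^ 2 / (6 * (q:ℝ) ^ 3) ≤ Real.log (Real.exp x + q - 1) - Real.log q - x / q := by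
  set M : ℝ := (q:ℝ) with hMdef
  have hM2 : (2:ℝ) ≤ M := by rw [hMdef]; exact_mod_cast hq
  have hM0 : (0:ℝ) < M := by linarith
  set y : ℝ := (Real.exp x - 1) / M with hy
  have hy0 : 0 ≤ y := div_nonneg (by nlinarith [Real.one_le_exp hx]) hM0.le
  have hexp3 : Real.exp x ≤ 3 := by
    calc Real.exp x ≤ Real.exp 1 := Real.exp_le_exp.2 hx1
      _ ≤ 3 := by linarith [Real.exp_one_lt_d9]
  have hMy : M * y = Real.exp x - 1 := by rw [hy]; field_simp
  have hy1 : y ≤ 1 := by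
    rw [hy, div_le_one hM0]; linarith
  -- step 1 : exp x + y^2 ≤ (1+y)^q
  have hstep : Real.exp x + y ^ 2 ≤ (1 + y) ^ q := by
    obtain ⟨m, rfl⟩ : ∃ m, q = m + 2 := ⟨q - 2, by omega⟩
    have hb := one_add_mul_le_pow (by linarith : (-2:ℝ) ≤ y) m
    have h1 : (1 + (m:ℝ) * y) * (1 + y) ^ 2 ≤ (1 + y) ^ (m + 2) := by
      rw [pow_add]
      exact mul_le_mul_of_nonneg_right hb (by positivity)
    have hm : M = (m:ℝ) + 2 := by rw [hMdef]; push_cast; ring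
    have hqy : Real.exp x = 1 + ((m:ℝ) + 2) * y := by rw [← hm]; linarith [hMy]
    nlinarith [mul_nonneg (mul_nonneg (Nat.cast_nonneg m : (0:ℝ) ≤ m) hy0) (sq_nonneg y),
      mul_nonneg (Nat.cast_nonneg m : (0:ℝ) ≤ m) (sq_nonneg y), sq_nonneg y]
  set A : ℝ := y ^ 2 * Real.exp (-x) with hA
  have hA0 : 0 ≤ A := by positivity
  have hA1 : A ≤ 1 := by
    have h1 : Real.exp (-x) ≤ 1 := Real.exp_le_one_iff.2 (by linarith)
    nlinarith
  have h1A : (0:ℝ) < 1 + A := by linarith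
  have hprod : Real.exp x * (1 + A) = Real.exp x + y ^ 2 := by
    rw [hA, mul_add, mul_one]
    congr 1
    rw [← mul_assoc, mul_comm (Real.exp x), mul_assoc, ← Real.exp_add]
    simp
  have hlogkey : x + Real.log (1 + A) ≤ M * Real.log (1 + y) := by
    have h1 : Real.exp x * (1 + A) ≤ (1 + y) ^ q := by rw [hprod]; exact hstep
    have h2 : Real.log (Real.exp x * (1 + A)) ≤ Real.log ((1 + y) ^ q) :=
      Real.log_le_log (by positivity) h1
    rw [Real.log_mul (Real.exp_ne_zero x) (by positivity), Real.log_exp, Real.log_pow] at h2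
    exact_mod_cast h2
  -- log (1+A) ≥ A/2
  have hlogA : A / 2 ≤ Real.log (1 + A) := by
    have hz : Real.exp (A / (1 + A)) ≤ 1 + A := by
      have h := Real.add_one_le_exp (-(A / (1 + A)))
      rw [Real.exp_neg] at h
      have h2 : (1:ℝ) / (1 + A) ≤ (Real.exp (A / (1 + A)))⁻¹ := by
        have he : -(A / (1 + A)) + 1 = 1 / (1 + A) := by field_simp; ring
        linarith
      have h3 := inv_anti₀ (by positivity : (0:ℝ) < 1 / (1 + A)) h2
      simpa [one_div] using h3
    have h4 : A / (1 + A) ≤ Real.log (1 + A) := (Real.le_log_iff_exp_le h1A).2 hz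
    have h5 : A / 2 ≤ A / (1 + A) := by
      apply div_le_div_of_nonneg_left hA0 h1A (by linarith)
    linarith
  -- A ≥ x^2 / (3 M^2)
  have hyx : x ≤ M * y := by rw [hMy]; linarith [Real.add_one_le_exp x]
  have hx2 : x ^ 2 ≤ M ^ 2 * y ^ 2 := by nlinarith [mul_le_mul hyx hyx hx (le_trans hx hyx)]
  have hexpneg : (1:ℝ) / 3 ≤ Real.exp (-x) := by
    rw [Real.exp_neg, one_div]
    exact inv_anti₀ (Real.exp_pos x) hexp3
  have hAx : x ^ 2 / (3 * M ^ 2) ≤ A := by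
    rw [hA, div_le_iff₀ (by positivity)]
    nlinarith [mul_le_mul hx2 hexpneg (by norm_num) (by positivity : (0:ℝ) ≤ M ^ 2 * y ^ 2)]
  have hlog2 : x ^ 2 / (6 * M ^ 2) ≤ Real.log (1 + A) := by
    have : x ^ 2 / (6 * M ^ 2) = x ^ 2 / (3 * M ^ 2) / 2 := by ring
    rw [this]; linarith
  -- assemble
  have hsplit : Real.exp x + M - 1 = M * (1 + y) := by rw [hy]; field_simp; ring
  have hlogeq : Real.log (Real.exp x + M - 1) = Real.log M + Real.log (1 + y) := by
    rw [hsplit, Real.log_mul (by positivity) (by positivity)]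
  have hfin : x / M + x ^ 2 / (6 * M ^ 3) ≤ Real.log (1 + y) := by
    have h5 : x + x ^ 2 / (6 * M ^ 2) ≤ M * Real.log (1 + y) := by linarith
    have h6 : (x + x ^ 2 / (6 * M ^ 2)) / M ≤ Real.log (1 + y) :=
      (div_le_iff₀ hM0).2 (by linarith)
    have h7 : (x + x ^ 2 / (6 * M ^ 2)) / M = x / M + x ^ 2 / (6 * M ^ 3) := by
      field_simp
    linarith
  rw [hlogeq]
  linarith
section aux
variable {Ω : Type*} [MeasurableSpace Ω] (μ : Measure Ω) [IsProbabilityMeasure μ]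

lemma int_log_aux {W : Ω → ℝ} (hWmeas : Measurable W) (hWnn : ∀ ω, 0 ≤ W ω)
    (hWint : Integrable W μ) {b : ℝ} (hb : 0 < b) (q : ℕ) (hq : 2 ≤ q)
    {t : ℝ} (ht0 : 0 ≤ t) (ht1 : t ≤ 1) :
    Integrable (fun ω => Real.log (Real.exp (b * W ω * t) + q - 1)) μ := by
  have hQ2 : (2:ℝ) ≤ (q:ℝ) := by exact_mod_cast hq
  apply Integrable.mono' ((hWint.const_mul b).add (integrable_const (Real.log q)))
  · exact (((((hWmeas.const_mul b).mul_const t).exp.add_const ((q:ℝ))).sub_const 1).log).aestronglyMeasurable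
  · filter_upwards with ω
    have hx0 : 0 ≤ b * W ω * t := mul_nonneg (mul_nonneg hb.le (hWnn ω)) ht0
    have h1 : (1:ℝ) ≤ Real.exp (b * W ω * t) := Real.one_le_exp hx0
    have hpos : (0:ℝ) < Real.exp (b * W ω * t) + q - 1 := by linarith
    have hnn : 0 ≤ Real.log (Real.exp (b * W ω * t) + q - 1) :=
      Real.log_nonneg (by linarith)
    rw [Real.norm_eq_abs, abs_of_nonneg hnn]
    have hupper : Real.exp (b * W ω * t) + q - 1 ≤ Real.exp (b * W ω * t) * q := by
      nlinarith
    calc Real.log (Real.exp (b * W ω * t) + q - 1)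
        ≤ Real.log (Real.exp (b * W ω * t) * q) := Real.log_le_log hpos hupper
      _ = b * W ω * t + Real.log q := by
          rw [Real.log_mul (Real.exp_ne_zero _) (by positivity), Real.log_exp]
      _ ≤ b * W ω + Real.log q := by
          have : b * W ω * t ≤ b * W ω * 1 :=
            mul_le_mul_of_nonneg_left ht1 (mul_nonneg hb.le (hWnn ω))
          linarith

end aux

section aux2
variable {Ω : Type*} [MeasurableSpace Ω] {μ : Measure Ω} [IsProbabilityMeasure μ]

lemma trunc_int {W : Ω → ℝ} (hWmeas : Measurable W) (hWnn : ∀ ω, 0 ≤ W ω)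
    (hWint : Integrable W μ) (c : ℝ) :
    Integrable (fun ω => if W ω ≤ c then W ω ^ 2 else 0) μ := by
  apply Integrable.mono' (hWint.const_mul |c|)
  · exact ((hWmeas.pow_const 2).ite (measurableSet_le hWmeas measurable_const)
      measurable_const).aestronglyMeasurable
  · filter_upwards with ω
    rw [Real.norm_eq_abs]
    by_cases h : W ω ≤ c
    · rw [if_pos h, abs_of_nonneg (sq_nonneg _)]
      nlinarith [hWnn ω, le_abs_self c]
    · rw [if_neg h, abs_zero]
      exact mul_nonneg (abs_nonneg c) (hWnn ω)

lemma trunc_unbounded {W : Ω → ℝ} (hWmeas : Measurable W) (hWnn : ∀ ω, 0 ≤ W ω)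
    (hWint : Integrable W μ) (hW2 : ¬ Integrable (fun ω => (W ω) ^ 2) μ) (B : ℝ) :
    ∃ n : ℕ, B < ∫ ω, (if W ω ≤ (n:ℝ) then W ω ^ 2 else 0) ∂μ := by
  by_contra hcon
  push_neg at hcon
  apply hW2
  set f : ℕ → Ω → ENNReal := fun n ω => ENNReal.ofReal (if W ω ≤ (n:ℝ) then W ω ^ 2 else 0)
    with hf
  have hfmeas : ∀ n, Measurable (f n) := fun n =>
    ((hWmeas.pow_const 2).ite (measurableSet_le hWmeas measurable_const)
      measurable_const).ennreal_ofReal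
  have hmono : Monotone f := by
    intro n m hnm ω
    apply ENNReal.ofReal_le_ofReal
    by_cases h : W ω ≤ (n:ℝ)
    · rw [if_pos h, if_pos (h.trans (by exact_mod_cast hnm))]
    · rw [if_neg h]
      by_cases h2 : W ω ≤ (m:ℝ)
      · rw [if_pos h2]; exact sq_nonneg _
      · rw [if_neg h2]
  have hsup : ∀ ω, (⨆ n, f n ω) = ENNReal.ofReal (W ω ^ 2) := by
    intro ω
    apply le_antisymm
    · apply iSup_le
      intro n
      apply ENNReal.ofReal_le_ofReal
      by_cases h : W ω ≤ (n:ℝ)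
      · rw [if_pos h]
      · rw [if_neg h]; exact sq_nonneg _
    · obtain ⟨n, hn⟩ := exists_nat_ge (W ω)
      have : f n ω = ENNReal.ofReal (W ω ^ 2) := by rw [hf]; simp [if_pos hn]
      rw [← this]
      exact le_iSup (fun n => f n ω) n
  have hlin : ∫⁻ ω, ENNReal.ofReal (W ω ^ 2) ∂μ ≤ ENNReal.ofReal B := by
    have h1 : ∫⁻ ω, ENNReal.ofReal (W ω ^ 2) ∂μ = ⨆ n, ∫⁻ ω, f n ω ∂μ := by
      rw [← lintegral_iSup hfmeas hmono]
      congr 1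
      ext ω
      exact (hsup ω).symm
    rw [h1]
    apply iSup_le
    intro n
    have h2 : ∫⁻ ω, f n ω ∂μ
        = ENNReal.ofReal (∫ ω, (if W ω ≤ (n:ℝ) then W ω ^ 2 else 0) ∂μ) := by
      rw [MeasureTheory.ofReal_integral_eq_lintegral_ofReal
        (trunc_int hWmeas hWnn hWint (n:ℝ))]
      filter_upwards with ω
      by_cases h : W ω ≤ (n:ℝ)
      · rw [if_pos h]; exact sq_nonneg _
      · rw [if_neg h]; exact le_rfl
    rw [h2]
    exact ENNReal.ofReal_le_ofReal (hcon n)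
  refine ⟨(hWmeas.pow_const 2).aestronglyMeasurable, ?_⟩
  rw [hasFiniteIntegral_iff_ofReal (by filter_upwards with ω; exact sq_nonneg _)]
  exact lt_of_le_of_lt hlin ENNReal.ofReal_lt_top

end aux2

/-- **Spontaneous magnetization for infinite-variance weights**: if `E[W²]=∞`, every
maximizer of `p_{β,0}` on `[0,1]` is strictly positive, and in fact bounded away
from `0` by some `ε > 0`. -/
theorem spontaneous_magnetization
    {Ω : Type*} [MeasurableSpace Ω] (μ : Measure Ω) [IsProbabilityMeasure μ]
    (W : Ω → ℝ) (hWmeas : Measurable W) (hWnn : ∀ ω, 0 ≤ W ω)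
    (hWint : Integrable W μ) (hEW : 0 < ∫ ω, W ω ∂μ)
    (hW2 : ¬ Integrable (fun ω => (W ω) ^ 2) μ)
    (q : ℕ) (hq : 2 ≤ q) (β : ℝ) (hβ : 0 < β) :
    (∀ s ∈ Icc (0 : ℝ) 1,
      (∀ t ∈ Icc (0 : ℝ) 1, pfun μ W q β t ≤ pfun μ W q β s) → 0 < s) ∧
    ∃ ε > (0 : ℝ), ∀ s ∈ Icc (0 : ℝ) 1,
      (∀ t ∈ Icc (0 : ℝ) 1, pfun μ W q β t ≤ pfun μ W q β s) → ε < s := by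
  set b := Real.exp β - 1 with hbdef
  have hb0 : 0 < b := by
    have h1 : (1:ℝ) < Real.exp β := by
      calc (1:ℝ) = Real.exp 0 := by simp
        _ < Real.exp β := Real.exp_lt_exp.2 hβ
    rw [hbdef]; linarith
  set Q := (q:ℝ) with hQdef
  have hQ2 : (2:ℝ) ≤ Q := by rw [hQdef]; exact_mod_cast hq
  have hQ0 : (0:ℝ) < Q := by linarith
  set E := ∫ ω, W ω ∂μ with hEdef
  set K := b * E / (2 * Q) with hKdef
  have hK0 : 0 < K := by rw [hKdef]; positivity
  have hpfun : ∀ t : ℝ, pfun μ W q β t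
      = (∫ ω, Real.log (Real.exp (b * W ω * t) + Q - 1) ∂μ)
        - K * ((Q - 1) * t ^ 2 + 2 * t - 1) := by
    intro t
    simp only [pfun]; rfl
  have hp0 : pfun μ W q β 0 = Real.log Q + K := by
    rw [hpfun 0]
    simp only [mul_zero, Real.exp_zero, show (1:ℝ) + Q - 1 = Q from by ring]
    rw [integral_const, probReal_univ, one_smul]
    ring
  have hint : ∀ t : ℝ, 0 ≤ t → t ≤ 1 →
      Integrable (fun ω => Real.log (Real.exp (b * W ω * t) + Q - 1)) μ := by
    intro t h0 h1
    rw [hQdef]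
    exact int_log_aux μ hWmeas hWnn hWint hb0 q hq h0 h1
  -- the centered integrand
  set G : ℝ → Ω → ℝ := fun t ω =>
    Real.log (Real.exp (b * W ω * t) + Q - 1) - (Real.log Q + b * t / Q * W ω) with hGdef
  have hGint : ∀ t : ℝ, 0 ≤ t → t ≤ 1 → Integrable (G t) μ := by
    intro t h0 h1
    exact (hint t h0 h1).sub ((integrable_const _).add (hWint.const_mul _))
  have hGeq : ∀ t : ℝ, 0 ≤ t → t ≤ 1 → ∫ ω, G t ω ∂μ
      = (∫ ω, Real.log (Real.exp (b * W ω * t) + Q - 1) ∂μ)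
        - (Real.log Q + b * t / Q * E) := by
    intro t h0 h1
    simp only [hGdef]
    have hg : Integrable (fun ω => Real.log Q + b * t / Q * W ω) μ :=
      (integrable_const _).add (hWint.const_mul _)
    rw [integral_sub (hint t h0 h1) hg,
      integral_add (integrable_const _) (hWint.const_mul _),
      integral_const, probReal_univ, one_smul,
      integral_const_mul, ← hEdef]
  have hdiff : ∀ t : ℝ, 0 ≤ t → t ≤ 1 →
      pfun μ W q β t - pfun μ W q β 0 = (∫ ω, G t ω ∂μ) - K * (Q - 1) * t ^ 2 := by
    intro t h0 h1
    rw [hpfun t, hp0, hGeq t h0 h1]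
    have h2K : 2 * K * t = b * t / Q * E := by
      rw [hKdef]; field_simp
    linear_combination -h2K
  -- choose a good truncation level and a good point t
  obtain ⟨n₀, hn₀⟩ := trunc_unbounded hWmeas hWnn hWint hW2 (K * (Q - 1) * (6 * Q ^ 3) / b ^ 2)
  set N : ℕ := n₀ + 1 with hNdef
  have hNpos : (0:ℝ) < (N:ℝ) := by rw [hNdef]; push_cast; positivity
  have hSmono : (∫ ω, (if W ω ≤ (n₀:ℝ) then W ω ^ 2 else 0) ∂μ)
      ≤ ∫ ω, (if W ω ≤ (N:ℝ) then W ω ^ 2 else 0) ∂μ := by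
    apply integral_mono (trunc_int hWmeas hWnn hWint (n₀:ℝ))
      (trunc_int hWmeas hWnn hWint (N:ℝ))
    intro ω
    dsimp only
    by_cases h : W ω ≤ (n₀:ℝ)
    · rw [if_pos h, if_pos (h.trans (by exact_mod_cast Nat.le_succ n₀))]
    · rw [if_neg h]
      by_cases h2 : W ω ≤ (N:ℝ)
      · rw [if_pos h2]; exact sq_nonneg _
      · rw [if_neg h2]
  have hSN : K * (Q - 1) * (6 * Q ^ 3) / b ^ 2
      < ∫ ω, (if W ω ≤ (N:ℝ) then W ω ^ 2 else 0) ∂μ := lt_of_lt_of_le hn₀ hSmono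
  set t : ℝ := min 1 (1 / (b * N)) with htdef
  have ht0 : 0 < t := lt_min one_pos (by positivity)
  have ht1 : t ≤ 1 := min_le_left _ _
  have htN : t ≤ 1 / (b * N) := min_le_right _ _
  -- pointwise lower bound on G t
  have hψle : ∀ ω, b ^ 2 * t ^ 2 / (6 * Q ^ 3) * (if W ω ≤ (N:ℝ) then W ω ^ 2 else 0)
      ≤ G t ω := by
    intro ω
    have hx0 : 0 ≤ b * W ω * t := mul_nonneg (mul_nonneg hb0.le (hWnn ω)) ht0.le
    have hxq : b * t / Q * W ω = b * W ω * t / Q := by ring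
    by_cases h : W ω ≤ (N:ℝ)
    · rw [if_pos h]
      have hx1 : b * W ω * t ≤ 1 := by
        calc b * W ω * t ≤ b * (N:ℝ) * t := by
              apply mul_le_mul_of_nonneg_right _ ht0.le
              exact mul_le_mul_of_nonneg_left h hb0.le
          _ ≤ b * (N:ℝ) * (1 / (b * (N:ℝ))) := by
              apply mul_le_mul_of_nonneg_left htN (by positivity)
          _ = 1 := by field_simp
      have hpq := pointwise_quad q hq hx0 hx1
      rw [← hQdef] at hpq
      have he1 : b ^ 2 * t ^ 2 / (6 * Q ^ 3) * W ω ^ 2 = (b * W ω * t) ^ 2 / (6 * Q ^ 3) := by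
        ring
      simp only [hGdef]
      rw [hxq, he1]
      linarith [hpq]
    · rw [if_neg h, mul_zero]
      have hpn := pointwise_nonneg q hq hx0
      rw [← hQdef] at hpn
      simp only [hGdef]
      rw [hxq]
      linarith [hpn]
  have hψint : Integrable
      (fun ω => b ^ 2 * t ^ 2 / (6 * Q ^ 3) * (if W ω ≤ (N:ℝ) then W ω ^ 2 else 0)) μ :=
    (trunc_int hWmeas hWnn hWint (N:ℝ)).const_mul _
  have hGlower : b ^ 2 * t ^ 2 / (6 * Q ^ 3) * (∫ ω, (if W ω ≤ (N:ℝ) then W ω ^ 2 else 0) ∂μ)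
      ≤ ∫ ω, G t ω ∂μ := by
    rw [← integral_const_mul]
    exact integral_mono hψint (hGint t ht0.le ht1) hψle
  have hprod : K * (Q - 1) * t ^ 2
      < b ^ 2 * t ^ 2 / (6 * Q ^ 3) * (∫ ω, (if W ω ≤ (N:ℝ) then W ω ^ 2 else 0) ∂μ) := by
    have hc : (0:ℝ) < b ^ 2 * t ^ 2 / (6 * Q ^ 3) := by positivity
    have := mul_lt_mul_of_pos_left hSN hc
    have heq : b ^ 2 * t ^ 2 / (6 * Q ^ 3) * (K * (Q - 1) * (6 * Q ^ 3) / b ^ 2)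
        = K * (Q - 1) * t ^ 2 := by
      field_simp
    linarith [this, heq.ge, heq.le]
  have hgt : pfun μ W q β 0 < pfun μ W q β t := by
    have hd := hdiff t ht0.le ht1
    nlinarith [hGlower, hprod]
  -- continuity of pfun at 0 within [0,1]
  have hcont : ContinuousWithinAt (pfun μ W q β) (Icc (0:ℝ) 1) 0 := by
    have h1 : ContinuousWithinAt
        (fun s => ∫ ω, Real.log (Real.exp (b * W ω * s) + Q - 1) ∂μ) (Icc (0:ℝ) 1) 0 := by
      apply continuousWithinAt_of_dominated (bound := fun ω => b * W ω + Real.log Q)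
      · apply Filter.Eventually.of_forall
        intro s
        exact (((((hWmeas.const_mul b).mul_const s).exp.add_const Q).sub_const 1).log).aestronglyMeasurable
      · filter_upwards [self_mem_nhdsWithin] with s hs
        filter_upwards with ω
        have hx0 : 0 ≤ b * W ω * s := mul_nonneg (mul_nonneg hb0.le (hWnn ω)) hs.1
        have hbd := sm_log_bound q hq hx0
        rw [← hQdef] at hbd
        have : b * W ω * s ≤ b * W ω :=
          mul_le_mul_of_nonneg_left hs.2 (mul_nonneg hb0.le (hWnn ω)) |>.trans_eq (mul_one _)
        linarith [hbd]
      · exact (hWint.const_mul b).add (integrable_const _)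
      · filter_upwards with ω
        apply Continuous.continuousWithinAt
        apply Continuous.log
        · exact ((Real.continuous_exp.comp (continuous_const.mul continuous_id)).add
            continuous_const).sub continuous_const
        · intro s
          have h := Real.exp_pos (b * W ω * s)
          intro hcontra
          nlinarith
    have h2 : Continuous (fun s : ℝ => K * ((Q - 1) * s ^ 2 + 2 * s - 1)) :=
      continuous_const.mul (((continuous_const.mul (continuous_pow 2)).add
        (continuous_const.mul continuous_id)).sub continuous_const)
    have h3 := h1.sub h2.continuousWithinAt
    have hfun : (fun s => (∫ ω, Real.log (Real.exp (b * W ω * s) + Q - 1) ∂μ)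
        - K * ((Q - 1) * s ^ 2 + 2 * s - 1)) = pfun μ W q β :=
      funext fun s => (hpfun s).symm
    rw [← hfun]; exact h3
  -- extract ε
  have hev : ∀ᶠ s in 𝓝[Icc (0:ℝ) 1] 0, pfun μ W q β s < pfun μ W q β t :=
    Filter.Tendsto.eventually_lt_const hgt hcont
  rw [eventually_nhdsWithin_iff] at hev
  rw [Metric.eventually_nhds_iff] at hev
  obtain ⟨ε, hε0, hε⟩ := hev
  have key : ∀ s ∈ Icc (0:ℝ) 1,
      (∀ u ∈ Icc (0:ℝ) 1, pfun μ W q β u ≤ pfun μ W q β s) → ε / 2 < s := by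
    intro s hs hmax
    by_contra hlt
    push_neg at hlt
    have hds : dist s 0 < ε := by
      rw [Real.dist_eq, sub_zero, abs_of_nonneg hs.1]; linarith
    have h4 := hε hds hs
    have h5 := hmax t ⟨ht0.le, ht1⟩
    linarith
  exact ⟨fun s hs h => lt_trans (half_pos hε0) (key s hs h), ε / 2, half_pos hε0, key⟩
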